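/- Every finite connected graph is representable as a visibility graph in R^3 with connected representing regions: start with a visibility representation of a spanning tree by solid balls (nested-sphere construction), and for each non-tree edge VW remove the open line segment between chosen points v ∈ V and w ∈ W from all regions; this adds exactly the sightline vw without disconnecting any region. -/

import Mathlib

open Set

/-- A sightline in `ℝ³` between the regions of `u` and `v`. -/
def Sightline3 {V : Type*} (F : V → Set (ℝ × ℝ × ℝ)) (u v : V) : Prop :=
  ∃ a ∈ F u, ∃ b ∈ F v, ∀ w, w ≠ u → w ≠ v → segment ℝ a b ∩ F w = ∅

/-- A visibility representation in `ℝ³`. -/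
structure IsVisRep3 {V : Type*} (G : SimpleGraph V) (F : V → Set (ℝ × ℝ × ℝ)) : Prop where
  nonempty : ∀ v, (F v).Nonempty
  disjoint : ∀ u v, u ≠ v → Disjoint (F u) (F v)
  adj_iff : ∀ u v, u ≠ v → (G.Adj u v ↔ Sightline3 F u v)

set_option linter.unusedSectionVars false
set_option maxHeartbeats 1000000



noncomputable section VisAux

abbrev E3 : Type := ℝ × ℝ × ℝ

lemma dist3 (a b : E3) : dist a b = max |a.1-b.1| (max |a.2.1-b.2.1| |a.2.2-b.2.2|) := by
  simp [Prod.dist_eq, Real.dist_eq]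

lemma seg_comp1 (t : ℝ) (a b : E3) : (a + t • (b-a)).1 = a.1 + t*(b.1-a.1) := by
  simp [Prod.smul_def]
lemma seg_comp2 (t : ℝ) (a b : E3) : (a + t • (b-a)).2.1 = a.2.1 + t*(b.2.1-a.2.1) := by
  simp [Prod.smul_def]
lemma seg_comp3 (t : ℝ) (a b : E3) : (a + t • (b-a)).2.2 = a.2.2 + t*(b.2.2-a.2.2) := by
  simp [Prod.smul_def]

lemma mem_seg_param {a b : E3} {t : ℝ} (h0 : 0 ≤ t) (h1 : t ≤ 1) :
    a + t • (b - a) ∈ segment ℝ a b := by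
  rw [segment_eq_image']
  exact ⟨t, ⟨h0, h1⟩, rfl⟩

lemma seg_param_of_mem {a b y : E3} (hy : y ∈ segment ℝ a b) :
    ∃ t : ℝ, 0 ≤ t ∧ t ≤ 1 ∧ y = a + t • (b - a) := by
  rw [segment_eq_image'] at hy
  obtain ⟨t, ⟨h0, h1⟩, ht⟩ := hy
  exact ⟨t, h0, h1, ht.symm⟩

/-- Points of `segment x₁ x₂` where `x₁ = γ t₁`, `x₂ = γ t₂` are of the form `γ t`, `t ∈ [t₁,t₂]`. -/
lemma seg_sub_param {a b : E3} {t1 t2 : ℝ} (h12 : t1 ≤ t2) {y : E3}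
    (hy : y ∈ segment ℝ (a + t1 • (b-a)) (a + t2 • (b-a))) :
    ∃ t : ℝ, t1 ≤ t ∧ t ≤ t2 ∧ y = a + t • (b - a) := by
  obtain ⟨s, hs0, hs1, hy⟩ := seg_param_of_mem hy
  refine ⟨t1 + s * (t2 - t1), by nlinarith, by nlinarith, ?_⟩
  rw [hy]
  have : (a + t2 • (b-a)) - (a + t1 • (b-a)) = (t2 - t1) • (b - a) := by
    rw [sub_smul]; abel
  rw [this, smul_smul, add_smul]
  abel

lemma seg_infinite {x y : E3} (h : x ≠ y) : (segment ℝ x y).Infinite := by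
  rw [segment_eq_image']
  apply Set.Infinite.image
  · intro s _ t _ hst
    have hxy : y - x ≠ 0 := sub_ne_zero.mpr h.symm
    have := smul_left_injective ℝ hxy (by
      have := hst
      simpa using this)
    simpa using this
  · rw [← Set.infinite_coe_iff]
    exact Set.Icc.infinite (by norm_num)

/-- Join two points in a set via a straight segment. -/
lemma JoinedIn.of_seg {S : Set E3} {a b : E3}
    (h : ∀ t : ℝ, 0 ≤ t → t ≤ 1 → a + t • (b - a) ∈ S) : JoinedIn S a b := by
  have hc : Continuous fun t : unitInterval => a + (t : ℝ) • (b - a) := by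
    fun_prop
  refine ⟨⟨⟨fun t => a + (t : ℝ) • (b - a), hc⟩, by simp, by simp⟩, ?_⟩
  intro t
  exact h t t.2.1 t.2.2

/-- Threshold crossing lemma. -/
lemma threshold {f : ℝ → ℝ} (hf : Continuous f) {A B : ℝ} (hAB : A < B)
    (h0 : f 0 < A) (h1 : B < f 1) :
    ∃ t1 t2 : ℝ, 0 ≤ t1 ∧ t1 < t2 ∧ t2 ≤ 1 ∧ f t1 = A ∧ f t2 = B ∧
      (∀ t, t1 ≤ t → t ≤ t2 → A ≤ f t ∧ f t ≤ B) := by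
  classical
  set S2 : Set ℝ := Icc (0:ℝ) 1 ∩ f ⁻¹' (Ici B) with hS2
  have hS2c : IsClosed S2 := isClosed_Icc.inter (isClosed_Ici.preimage hf)
  have hS2ne : S2.Nonempty := ⟨1, ⟨by norm_num, le_rfl⟩, le_of_lt h1⟩
  have hS2bdd : BddBelow S2 := ⟨0, fun t ht => ht.1.1⟩
  set t2 := sInf S2 with ht2def
  have ht2mem : t2 ∈ S2 := hS2c.csInf_mem hS2ne hS2bdd
  have ht2Icc : t2 ∈ Icc (0:ℝ) 1 := ht2mem.1
  have hft2 : B ≤ f t2 := ht2mem.2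
  have ht2pos : 0 < t2 := by
    rcases lt_or_eq_of_le ht2Icc.1 with h | h
    · exact h
    · exfalso; rw [← h] at hft2; linarith
  have hlt2 : ∀ t, 0 ≤ t → t < t2 → f t < B := by
    intro t ht0 htlt
    by_contra hge
    push_neg at hge
    have : t ∈ S2 := ⟨⟨ht0, le_trans htlt.le ht2Icc.2⟩, hge⟩
    exact absurd (csInf_le hS2bdd this) (by linarith)
  have hft2eq : f t2 = B := by
    refine le_antisymm ?_ hft2
    by_contra hlt
    push_neg at hlt
    have hmem : f ⁻¹' (Ioi B) ∈ nhds t2 :=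
      hf.continuousAt.preimage_mem_nhds (isOpen_Ioi.mem_nhds hlt)
    obtain ⟨ε, hε, hball⟩ := Metric.mem_nhds_iff.mp hmem
    set t' := max 0 (t2 - ε/2) with ht'
    have ht'lt : t' < t2 := max_lt ht2pos (by linarith)
    have ht'0 : 0 ≤ t' := le_max_left _ _
    have ht'ball : t' ∈ Metric.ball t2 ε := by
      rw [Metric.mem_ball, Real.dist_eq, abs_of_nonpos (by linarith)]
      have : t2 - ε/2 ≤ t' := le_max_right _ _
      linarith
    have h9 := hball ht'ball
    simp only [Set.mem_preimage, Set.mem_Ioi] at h9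
    have h8 := hlt2 t' ht'0 ht'lt
    linarith
  -- now t1
  set S1 : Set ℝ := Icc (0:ℝ) t2 ∩ f ⁻¹' (Iic A) with hS1
  have hS1c : IsClosed S1 := isClosed_Icc.inter (isClosed_Iic.preimage hf)
  have hS1ne : S1.Nonempty := ⟨0, ⟨le_rfl, ht2pos.le⟩, h0.le⟩
  have hS1bdd : BddAbove S1 := ⟨t2, fun t ht => ht.1.2⟩
  set t1 := sSup S1 with ht1def
  have ht1mem : t1 ∈ S1 := hS1c.csSup_mem hS1ne hS1bdd
  have ht1Icc : t1 ∈ Icc (0:ℝ) t2 := ht1mem.1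
  have hft1 : f t1 ≤ A := ht1mem.2
  have ht1lt : t1 < t2 := by
    rcases lt_or_eq_of_le ht1Icc.2 with h | h
    · exact h
    · exfalso; rw [h] at hft1; linarith
  have hgt1 : ∀ t, t1 < t → t ≤ t2 → A < f t := by
    intro t htgt htle
    by_contra hle
    push_neg at hle
    have : t ∈ S1 := ⟨⟨le_trans ht1Icc.1 htgt.le, htle⟩, hle⟩
    exact absurd (le_csSup hS1bdd this) (by linarith)
  have hft1eq : f t1 = A := by
    refine le_antisymm hft1 ?_
    by_contra hlt
    push_neg at hlt
    have hmem : f ⁻¹' (Iio A) ∈ nhds t1 :=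
      hf.continuousAt.preimage_mem_nhds (isOpen_Iio.mem_nhds hlt)
    obtain ⟨ε, hε, hball⟩ := Metric.mem_nhds_iff.mp hmem
    set t' := min t2 (t1 + ε/2) with ht'
    have ht'gt : t1 < t' := lt_min ht1lt (by linarith)
    have ht'le : t' ≤ t2 := min_le_left _ _
    have ht'ball : t' ∈ Metric.ball t1 ε := by
      rw [Metric.mem_ball, Real.dist_eq, abs_of_nonneg (by linarith)]
      have : t' ≤ t1 + ε/2 := min_le_right _ _
      linarith
    have h9 := hball ht'ball
    simp only [Set.mem_preimage, Set.mem_Iio] at h9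
    have h8 := hgt1 t' ht'gt ht'le
    linarith
  refine ⟨t1, t2, ht1Icc.1, ht1lt, ht2Icc.2, hft1eq, hft2eq, ?_⟩
  intro t htl htu
  constructor
  · rcases eq_or_lt_of_le htl with h | h
    · rw [← h, hft1eq]
    · exact (hgt1 t h htu).le
  · rcases eq_or_lt_of_le htu with h | h
    · rw [h, hft2eq]
    · exact (hlt2 t (le_trans ht1Icc.1 htl) h).le


/-- Core blocker-interval existence. -/
lemma core {a b q : E3} {A B : ℝ} (hA : dist a q < A) (hAB : A < B) (hB : B < dist b q) :
    ∃ x₁ x₂ : E3, x₁ ∈ segment ℝ a b ∧ x₂ ∈ segment ℝ a b ∧ x₁ ≠ x₂ ∧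
      ∀ y ∈ segment ℝ x₁ x₂, A ≤ dist y q ∧ dist y q ≤ B := by
  have hf : Continuous fun t : ℝ => dist (a + t • (b - a)) q := by fun_prop
  obtain ⟨t1, t2, h0, h12, h1, he1, he2, hmid⟩ :=
    threshold hf hAB (by simpa using hA) (by simpa using hB)
  refine ⟨a + t1 • (b - a), a + t2 • (b - a), mem_seg_param h0 (by linarith),
    mem_seg_param (by linarith) h1, ?_, ?_⟩
  · intro heq
    have : dist (a + t1 • (b - a)) q = dist (a + t2 • (b - a)) q := by rw [heq]
    rw [he1, he2] at this
    exact absurd this (ne_of_lt hAB)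
  · intro y hy
    obtain ⟨t, htl, htu, rfl⟩ := seg_sub_param (le_of_lt h12) hy
    exact hmid t htl htu


end VisAux


section Order
variable {V : Type*} [Fintype V] (G : SimpleGraph V)

lemma exists_adj_out {S : Set V} {x y : V} (w : G.Walk x y)
    (hx : x ∈ S) (hy : y ∉ S) : ∃ u ∈ S, ∃ v, v ∉ S ∧ G.Adj u v := by
  induction w with
  | nil => exact absurd hx hy
  | @cons x b y h w ih =>
    by_cases hb : b ∈ S
    · exact ih hb hy
    · exact ⟨x, hx, b, hb, h⟩

lemma exists_ordering (hG : G.Connected) :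
    ∃ f : Fin (Fintype.card V) → V, Function.Bijective f ∧
      ∀ i, i.val ≠ 0 → ∃ j, j < i ∧ G.Adj (f j) (f i) := by
  classical
  have key : ∀ k : ℕ, k ≤ Fintype.card V → ∃ f : Fin k → V, Function.Injective f ∧
      ∀ i, i.val ≠ 0 → ∃ j, j < i ∧ G.Adj (f j) (f i) := by
    intro k
    induction k with
    | zero => exact fun _ => ⟨Fin.elim0, fun i => i.elim0, fun i => i.elim0⟩
    | succ k ih =>
      intro hk
      obtain ⟨f, hfi, hfa⟩ := ih (Nat.le_of_succ_le hk)
      rcases Nat.eq_zero_or_pos k with hk0 | hkpos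
      · subst hk0
        refine ⟨fun _ => hG.nonempty.some, ?_, ?_⟩
        · intro a b _
          exact Fin.ext (by omega)
        · intro i hi
          exact absurd (by omega : i.val = 0) hi
      · -- the range of f is not everything
        have hne : ∃ v : V, v ∉ Set.range f := by
          by_contra hall
          push_neg at hall
          have : Function.Surjective f := fun v => hall v
          have := Fintype.card_le_of_surjective f this
          simp at this
          omega
        obtain ⟨v0, hv0⟩ := hne
        have hx : f ⟨0, hkpos⟩ ∈ Set.range f := ⟨_, rfl⟩
        obtain ⟨u, hu, v, hv, huv⟩ :=
          exists_adj_out G ((hG.preconnected _ v0).some) hx hv0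
        obtain ⟨j0, hj0⟩ := hu
        refine ⟨Fin.snoc f v, ?_, ?_⟩
        · intro a b hab
          rcases Fin.eq_castSucc_or_eq_last a with ⟨a', rfl⟩ | rfl <;>
            rcases Fin.eq_castSucc_or_eq_last b with ⟨b', rfl⟩ | rfl
          · simp only [Fin.snoc_castSucc] at hab
            exact congrArg _ (hfi hab)
          · rw [Fin.snoc_castSucc, Fin.snoc_last] at hab
            exact absurd ⟨a', hab⟩ hv
          · rw [Fin.snoc_castSucc, Fin.snoc_last] at hab
            exact absurd ⟨b', hab.symm⟩ hv
          · rfl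
        · intro i hi
          rcases Fin.eq_castSucc_or_eq_last i with ⟨i', rfl⟩ | rfl
          · obtain ⟨j, hj, hadj⟩ := hfa i' (by simpa using hi)
            refine ⟨j.castSucc, by simpa using hj, ?_⟩
            simpa [Fin.snoc_castSucc] using hadj
          · refine ⟨j0.castSucc, j0.castSucc_lt_last, ?_⟩
            rw [Fin.snoc_castSucc, Fin.snoc_last, hj0]
            exact huv
  obtain ⟨f, hfi, hfa⟩ := key _ le_rfl
  refine ⟨f, (Fintype.bijective_iff_injective_and_card f).mpr ⟨hfi, by simp⟩, ?_⟩
  exact hfa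
end Order


noncomputable section Tree

def sc (k : ℕ) : ℝ := (3/2) * (1/4)^(k+1)
def sh (k : ℕ) : ℝ := (1/4) * (1/4)^(k+1)

lemma sh_pos (k : ℕ) : 0 < sh k := by unfold sh; positivity
lemma sh_lt_sc (k : ℕ) : sh k < sc k := by
  have : (0:ℝ) < (1/4)^(k+1) := by positivity
  unfold sh sc; nlinarith
lemma sc_le (k : ℕ) : sc k ≤ 3/8 := by
  have h : ((1:ℝ)/4)^(k+1) ≤ (1/4)^1 := by
    apply pow_le_pow_of_le_one (by norm_num) (by norm_num)
    omega
  unfold sc; nlinarith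
lemma slot_sep {a b : ℕ} (hab : a < b) : sc b + sh b + sh a < sc a := by
  have h1 : ((1:ℝ)/4)^(b+1) ≤ (1/4)^(a+2) := by
    apply pow_le_pow_of_le_one (by norm_num) (by norm_num)
    omega
  have h2 : ((1:ℝ)/4)^(a+2) = (1/4)^(a+1) * (1/4) := by ring
  have h3 : (0:ℝ) < (1/4)^(a+1) := by positivity
  unfold sc sh
  nlinarith

variable {n : ℕ}

def posAux [NeZero n] (p : Fin n → Fin n)
    (hp : p 0 = 0 ∧ ∀ i : Fin n, i ≠ 0 → p i < i) : Fin n → ℝ × ℝ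
  | i =>
    if h : i = 0 then (0, 1)
    else
      let q := posAux p hp (p i)
      (q.1 - (7/10)*q.2 + (14/10)*q.2*(sc i.val), (14/10)*q.2*(sh i.val))
termination_by i => i.val
decreasing_by exact hp.2 i h

variable [NeZero n] (p : Fin n → Fin n)
  (hp : p 0 = 0 ∧ ∀ i : Fin n, i ≠ 0 → p i < i)
include hp

def xc (i : Fin n) : ℝ := (posAux p hp i).1
def sg (i : Fin n) : ℝ := (posAux p hp i).2

lemma posAux_zero : posAux p hp 0 = (0, 1) := by
  rw [posAux]
  simp

lemma posAux_ne {i : Fin n} (h : i ≠ 0) :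
    posAux p hp i = ((posAux p hp (p i)).1 - (7/10)*(posAux p hp (p i)).2
      + (14/10)*(posAux p hp (p i)).2*(sc i.val),
      (14/10)*(posAux p hp (p i)).2*(sh i.val)) := by
  conv_lhs => rw [posAux]
  simp [h]

lemma sg_zero : sg p hp 0 = 1 := by unfold sg; rw [posAux_zero]

lemma xc_ne {i : Fin n} (h : i ≠ 0) :
    xc p hp i = xc p hp (p i) - (7/10)*(sg p hp (p i))
      + (14/10)*(sg p hp (p i))*(sc i.val) := by
  unfold xc sg; rw [posAux_ne p hp h]

lemma sg_ne {i : Fin n} (h : i ≠ 0) :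
    sg p hp i = (14/10)*(sg p hp (p i))*(sh i.val) := by
  unfold sg; rw [posAux_ne p hp h]

lemma sg_pos_aux : ∀ (N : ℕ) (i : Fin n), i.val ≤ N → 0 < sg p hp i := by
  intro N
  induction N with
  | zero =>
    intro i hi
    have h0 : i = 0 := Fin.ext (by rw [Fin.val_zero]; omega)
    rw [h0, sg_zero]; norm_num
  | succ N ih =>
    intro i hi
    by_cases h : i = 0
    · rw [h, sg_zero]; norm_num
    · rw [sg_ne p hp h]
      have hlt : (p i).val < i.val := hp.2 i h
      have h1 := ih (p i) (by omega)
      have h2 := sh_pos i.val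
      positivity

lemma sg_pos (i : Fin n) : 0 < sg p hp i := sg_pos_aux p hp i.val i le_rfl

abbrev E3' : Type := ℝ × ℝ × ℝ

def ctr (i : Fin n) : E3' := (xc p hp i, 0, 0)

omit hp in
lemma dist3' (a b : E3') : dist a b = max |a.1-b.1| (max |a.2.1-b.2.1| |a.2.2-b.2.2|) := by
  simp [Prod.dist_eq, Real.dist_eq]

lemma dist_ctr (i j : Fin n) : dist (ctr p hp i) (ctr p hp j) = |xc p hp i - xc p hp j| := by
  rw [ctr, ctr, dist3']
  simp [abs_nonneg]

-- abbreviations local to this section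
local notation "X" => xc p hp
local notation "S" => sg p hp
local notation "C" => ctr p hp

lemma SP1 {i : Fin n} (h : i ≠ 0) :
    dist (C i) (C (p i)) + S i < (7/10) * S (p i) := by
  rw [dist_ctr, xc_ne p hp h, sg_ne p hp h]
  have hsp := sg_pos p hp (p i)
  have h1 := sh_pos i.val
  have h2 := sh_lt_sc i.val
  have h3 := sc_le i.val
  have habs : |X (p i) - (7/10)*(S (p i)) + (14/10)*(S (p i))*(sc i.val) - X (p i)|
      = (7/10)*(S (p i)) - (14/10)*(S (p i))*(sc i.val) := by
    rw [abs_of_nonpos (by nlinarith)]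
    ring
  rw [habs]
  nlinarith

lemma SP2 {i j : Fin n} (hi : i ≠ 0) (hj : j ≠ 0) (hij : i ≠ j) (hpij : p i = p j) :
    S i + S j < dist (C i) (C j) := by
  rw [dist_ctr, xc_ne p hp hi, xc_ne p hp hj, sg_ne p hp hi, sg_ne p hp hj, hpij]
  have hsp := sg_pos p hp (p j)
  have hvne : i.val ≠ j.val := fun hv => hij (Fin.ext hv)
  have key : ∀ a b : ℕ, a < b →
      (14/10)*(S (p j))*(sh a) + (14/10)*(S (p j))*(sh b)
        < |(X (p j) - (7/10)*(S (p j)) + (14/10)*(S (p j))*(sc a))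
            - (X (p j) - (7/10)*(S (p j)) + (14/10)*(S (p j))*(sc b))| := by
    intro a b hab
    have hsep := slot_sep hab
    have h1 := sh_pos a
    have h2 := sh_pos b
    have habs : |(X (p j) - (7/10)*(S (p j)) + (14/10)*(S (p j))*(sc a))
            - (X (p j) - (7/10)*(S (p j)) + (14/10)*(S (p j))*(sc b))|
        = (14/10)*(S (p j))*(sc a - sc b) := by
      rw [abs_of_nonneg (by nlinarith)]
      ring
    rw [habs]
    nlinarith
  rcases lt_or_gt_of_ne hvne with hlt | hgt
  · have := key i.val j.val hlt
    linarith [this]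
  · have := key j.val i.val hgt
    rw [abs_sub_comm] at this
    linarith [this]

/-- Descendant-or-self relation. -/
def Desc (j i : Fin n) : Prop := ∃ m : ℕ, p^[m] j = i

lemma desc_refl (i : Fin n) : Desc p i i := ⟨0, rfl⟩

lemma desc_step (j : Fin n) : Desc p j (p j) := ⟨1, rfl⟩

lemma desc_trans {i j k : Fin n} (h1 : Desc p i j) (h2 : Desc p j k) : Desc p i k := by
  obtain ⟨m1, hm1⟩ := h1
  obtain ⟨m2, hm2⟩ := h2
  exact ⟨m2 + m1, by rw [Function.iterate_add_apply, hm1, hm2]⟩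

lemma p_le (i : Fin n) : p i ≤ i := by
  by_cases h : i = 0
  · rw [h, hp.1]
  · exact (hp.2 i h).le

lemma iterate_le (m : ℕ) (j : Fin n) : p^[m] j ≤ j := by
  induction m with
  | zero => exact le_rfl
  | succ m ih =>
    rw [Function.iterate_succ_apply']
    exact le_trans (p_le p hp _) ih

lemma desc_le {j i : Fin n} (h : Desc p j i) : i ≤ j := by
  obtain ⟨m, hm⟩ := h
  rw [← hm]
  exact iterate_le p hp m j

lemma iterate_zero_fix (m : ℕ) : p^[m] (0 : Fin n) = 0 := by
  induction m with
  | zero => rfl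
  | succ m ih => rw [Function.iterate_succ_apply', ih, hp.1]

lemma desc_zero_aux : ∀ (N : ℕ) (j : Fin n), j.val ≤ N → Desc p j 0 := by
  intro N
  induction N with
  | zero =>
    intro j hj
    have h0 : j = 0 := Fin.ext (by rw [Fin.val_zero]; omega)
    rw [h0]; exact desc_refl p hp 0
  | succ N ih =>
    intro j hj
    by_cases h : j = 0
    · rw [h]; exact desc_refl p hp 0
    · have hlt : (p j).val < j.val := hp.2 j h
      exact desc_trans p hp (desc_step p hp j) (ih (p j) (by omega))

lemma desc_zero (j : Fin n) : Desc p j 0 := desc_zero_aux p hp j.val j le_rfl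

lemma child_of_desc {k i : Fin n} (h : Desc p k i) (hne : k ≠ i) :
    ∃ c : Fin n, c ≠ 0 ∧ p c = i ∧ Desc p k c := by
  classical
  have hex : ∃ m : ℕ, p^[m] k = i := h
  have hm := Nat.find_spec hex
  set m := Nat.find hex with hmdef
  have hm0 : m ≠ 0 := by
    intro h0
    rw [h0] at hm
    exact hne hm
  refine ⟨p^[m-1] k, ?_, ?_, ⟨m-1, rfl⟩⟩
  · intro hc
    have hi0 : i = 0 := by
      have : p^[m] k = p (p^[m-1] k) := by
        conv_lhs => rw [show m = (m-1)+1 by omega]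
        rw [Function.iterate_succ_apply']
      rw [this, hc, hp.1] at hm
      exact hm.symm
    have : p^[m-1] k = i := by rw [hc, hi0]
    exact absurd this (Nat.find_min hex (by omega))
  · have : p^[m] k = p (p^[m-1] k) := by
      conv_lhs => rw [show m = (m-1)+1 by omega]
      rw [Function.iterate_succ_apply']
    rw [← this, hm]

lemma SQ2_aux : ∀ (m : ℕ) (j i : Fin n), p^[m] j = i → j ≠ i →
    dist (C j) (C i) + S j < (7/10) * S i := by
  intro m
  induction m with
  | zero =>
    intro j i hm hne
    exact absurd hm hne
  | succ m ih =>
    intro j i hm hne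
    have hj0 : j ≠ 0 := by
      intro h0
      rw [h0, iterate_zero_fix p hp] at hm
      exact hne (by rw [h0, ← hm])
    by_cases hpj : p j = i
    · have := SP1 p hp hj0
      rwa [hpj] at this
    · rw [Function.iterate_succ_apply] at hm
      have h1 := ih (p j) i hm hpj
      have h2 := SP1 p hp hj0
      have h3 := dist_triangle (C j) (C (p j)) (C i)
      have h4 := sg_pos p hp (p j)
      linarith

lemma SQ2 {j i : Fin n} (h : Desc p j i) (hne : j ≠ i) :
    dist (C j) (C i) + S j < (7/10) * S i := by
  obtain ⟨m, hm⟩ := h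
  exact SQ2_aux p hp m j i hm hne

lemma SQ1 {j i : Fin n} (h : Desc p j i) :
    dist (C j) (C i) + S j ≤ S i := by
  by_cases hne : j = i
  · rw [hne, dist_self]
    simp
  · have h1 := SQ2 p hp h hne
    have h2 := sg_pos p hp i
    linarith

lemma SQ3_aux : ∀ (N : ℕ) (u w : Fin n), u.val + w.val ≤ N →
    ¬ Desc p u w → ¬ Desc p w u → S u + S w < dist (C u) (C w) := by
  intro N
  induction N with
  | zero =>
    intro u w hN hd1 hd2
    have : u = 0 := Fin.ext (by rw [Fin.val_zero]; omega)
    exact absurd (by rw [this]; exact desc_zero p hp w) hd2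
  | succ N ih =>
    intro u w hN hd1 hd2
    have hu0 : u ≠ 0 := by
      intro h0
      exact hd2 (by rw [h0]; exact desc_zero p hp w)
    have hw0 : w ≠ 0 := by
      intro h0
      exact hd1 (by rw [h0]; exact desc_zero p hp u)
    by_cases hD : Desc p w (p u)
    · have hwpu : w ≠ p u := by
        intro heq
        exact hd1 ⟨1, heq.symm⟩
      obtain ⟨c, hc0, hpc, hdc⟩ := child_of_desc p hp hD hwpu
      have hcu : c ≠ u := by
        intro heq
        exact hd2 (by rw [← heq]; exact hdc)
      have h1 := SP2 p hp hu0 hc0 (Ne.symm hcu) hpc.symm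
      have h2 := SQ1 p hp hdc
      have h3 := dist_triangle (C u) (C c) (C w)
      have h4 := dist_triangle (C u) (C w) (C c)
      have h5 := dist_comm (C w) (C c)
      linarith
    · have hD2 : ¬ Desc p (p u) w := by
        intro hd
        exact hd1 (desc_trans p hp (desc_step p hp u) hd)
      have hlt : (p u).val < u.val := hp.2 u hu0
      have h1 := ih (p u) w (by omega) hD2 hD
      have h2 := SP1 p hp hu0
      have h3 := dist_triangle (C u) (C (p u)) (C w)
      have h4 := dist_triangle (C (p u)) (C w) (C u)
      have h5 := dist_comm (C u) (C (p u))
      have h6 := sg_pos p hp (p u)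
      have h7 := dist_triangle (C (p u)) (C u) (C w)
      linarith

lemma SQ3 {u w : Fin n} (hd1 : ¬ Desc p u w) (hd2 : ¬ Desc p w u) :
    S u + S w < dist (C u) (C w) := by
  exact SQ3_aux p hp (u.val + w.val) u w le_rfl hd1 hd2

lemma lca_aux : ∀ (N : ℕ) (u w : Fin n), u.val + w.val ≤ N →
    ¬ Desc p u w → ¬ Desc p w u →
    ∃ z c₁ c₂ : Fin n, c₁ ≠ 0 ∧ c₂ ≠ 0 ∧ p c₁ = z ∧ p c₂ = z ∧ c₁ ≠ c₂ ∧
      Desc p u c₁ ∧ Desc p w c₂ := by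
  intro N
  induction N with
  | zero =>
    intro u w hN hd1 hd2
    have : u = 0 := Fin.ext (by rw [Fin.val_zero]; omega)
    exact absurd (by rw [this]; exact desc_zero p hp w) hd2
  | succ N ih =>
    intro u w hN hd1 hd2
    have hu0 : u ≠ 0 := by
      intro h0
      exact hd2 (by rw [h0]; exact desc_zero p hp w)
    by_cases hD : Desc p w (p u)
    · have hwpu : w ≠ p u := by
        intro heq
        exact hd1 ⟨1, heq.symm⟩
      obtain ⟨c, hc0, hpc, hdc⟩ := child_of_desc p hp hD hwpu
      have hcu : c ≠ u := by
        intro heq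
        exact hd2 (by rw [← heq]; exact hdc)
      exact ⟨p u, u, c, hu0, hc0, rfl, hpc, Ne.symm hcu, desc_refl p hp u, hdc⟩
    · have hD2 : ¬ Desc p (p u) w := by
        intro hd
        exact hd1 (desc_trans p hp (desc_step p hp u) hd)
      have hlt : (p u).val < u.val := hp.2 u hu0
      obtain ⟨z, c₁, c₂, hc₁0, hc₂0, hpc₁, hpc₂, hne, hd₁, hd₂⟩ :=
        ih (p u) w (by omega) hD2 hD
      exact ⟨z, c₁, c₂, hc₁0, hc₂0, hpc₁, hpc₂, hne,
        desc_trans p hp (desc_step p hp u) hd₁, hd₂⟩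

/-- The base region of vertex `i`: its cube minus the (open) cavity cubes of its children. -/
def F0 (i : Fin n) : Set E3' :=
  {y | dist y (C i) ≤ (8/10) * S i ∧
    ∀ j : Fin n, j ≠ 0 → p j = i → (9/10) * S j ≤ dist y (C j)}

lemma F0_desc_notmem {i j : Fin n} (h : Desc p i j) (hne : i ≠ j) {y : E3'}
    (hyi : y ∈ F0 p hp i) : y ∉ F0 p hp j := by
  intro hyj
  obtain ⟨c, hc0, hpc, hdc⟩ := child_of_desc p hp h hne
  have hkey : dist y (C c) < (9/10) * S c := by
    by_cases hic : i = c
    · have := hyi.1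
      rw [hic] at this
      have := sg_pos p hp c
      linarith
    · have h1 := SQ2 p hp hdc hic
      have h2 := hyi.1
      have h3 := dist_triangle y (C i) (C c)
      have h4 := sg_pos p hp i
      have h5 := sg_pos p hp c
      linarith
  exact absurd (hyj.2 c hc0 hpc) (by linarith)

lemma F0_disj {i j : Fin n} (hij : i ≠ j) {y : E3'}
    (hyi : y ∈ F0 p hp i) (hyj : y ∈ F0 p hp j) : False := by
  by_cases hd1 : Desc p i j
  · exact F0_desc_notmem p hp hd1 hij hyi hyj
  · by_cases hd2 : Desc p j i
    · exact F0_desc_notmem p hp hd2 (Ne.symm hij) hyj hyi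
    · have h1 := SQ3 p hp hd1 hd2
      have h2 := hyi.1
      have h3 := hyj.1
      have h4 := dist_triangle (C i) y (C j)
      have h5 := dist_comm y (C i)
      have h6 := sg_pos p hp i
      have h7 := sg_pos p hp j
      linarith

lemma AN1 {c : Fin n} {y : E3'} (h1 : (7/10) * S c ≤ dist y (C c))
    (h2 : dist y (C c) ≤ (8/10) * S c) : y ∈ F0 p hp c := by
  refine ⟨h2, ?_⟩
  intro j hj0 hpj
  have hsp1 := SP1 p hp hj0
  rw [hpj] at hsp1
  have h3 := dist_triangle y (C j) (C c)
  have h4 := dist_triangle y (C c) (C j)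
  have h5 := dist_comm (C j) (C c)
  have h6 := sg_pos p hp j
  linarith

lemma AN2 {c : Fin n} (hc0 : c ≠ 0) {y : E3'} (h1 : (9/10) * S c ≤ dist y (C c))
    (h2 : dist y (C c) ≤ S c) : y ∈ F0 p hp (p c) := by
  have hsp1 := SP1 p hp hc0
  constructor
  · have h3 := dist_triangle y (C c) (C (p c))
    have h4 := sg_pos p hp (p c)
    linarith
  · intro j hj0 hpj
    by_cases hjc : j = c
    · rw [hjc]; exact h1
    · have hsp2 := SP2 p hp hj0 hc0 hjc hpj
      have h3 := dist_triangle (C j) y (C c)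
      have h4 := dist_comm (C j) y
      have h5 := sg_pos p hp j
      linarith

lemma PL {c z : Fin n} (hzc : z ≠ c) (hzpc : z ≠ p c) {y : E3'}
    (h1 : (8/10) * S c < dist y (C c)) (h2 : dist y (C c) < (9/10) * S c) :
    y ∉ F0 p hp z := by
  intro hyz
  by_cases hd : Desc p z c
  · have hq := SQ2 p hp hd hzc
    have h3 := hyz.1
    have h4 := dist_triangle y (C z) (C c)
    have h5 := sg_pos p hp z
    have h6 := sg_pos p hp c
    linarith
  · by_cases hd2 : Desc p c z
    · have hcz : c ≠ z := fun h => hd (h ▸ desc_refl p hp z)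
      obtain ⟨c', hc'0, hpc', hdc'⟩ := child_of_desc p hp hd2 hcz
      have hcc' : c ≠ c' := by
        intro h
        exact hzpc (by rw [← hpc', ← h])
      have hq := SQ2 p hp hdc' hcc'
      have h3 := dist_triangle y (C c) (C c')
      have h4 := sg_pos p hp c
      have h5 := sg_pos p hp c'
      have h6 := hyz.2 c' hc'0 hpc'
      linarith
    · have hq := SQ3 p hp hd2 hd
      have h3 := hyz.1
      have h4 := dist_triangle (C c) y (C z)
      have h5 := dist_comm (C c) y
      have h6 := sg_pos p hp c
      have h7 := sg_pos p hp z
      linarith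

/-- Tree adjacency. -/
def TreeAdj (u w : Fin n) : Prop := (u ≠ 0 ∧ p u = w) ∨ (w ≠ 0 ∧ p w = u)

variable (Gf : SimpleGraph (Fin n)) (hGadj : ∀ i : Fin n, i ≠ 0 → Gf.Adj (p i) i)

/-- Index type of non-tree edges (as ordered pairs). -/
def EK : Type := {q : Fin n × Fin n // Gf.Adj q.1 q.2 ∧ ¬ TreeAdj p q.1 q.2}

instance : Countable (EK p Gf) := by
  unfold EK; infer_instance

instance : Finite (EK p Gf) := by
  unfold EK; infer_instance

def kidx : EK p Gf → ℕ := Classical.choose (exists_injective_nat (EK p Gf))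

lemma kidx_inj : Function.Injective (kidx p Gf) :=
  Classical.choose_spec (exists_injective_nat (EK p Gf))

def smin : ℝ := Finset.univ.inf' ⟨(0 : Fin n), Finset.mem_univ _⟩ S

lemma smin_le (i : Fin n) : smin p hp ≤ S i := Finset.inf'_le _ (Finset.mem_univ i)

lemma smin_pos : 0 < smin p hp := by
  unfold smin
  exact (Finset.lt_inf'_iff _).2 fun i _ => sg_pos p hp i

def zeta (k : EK p Gf) : ℝ := smin p hp / (20 * (kidx p Gf k + 1))

lemma zeta_pos (k : EK p Gf) : 0 < zeta p hp Gf k := by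
  have h1 := smin_pos p hp
  have h2 : (0:ℝ) < 20 * (kidx p Gf k + 1) := by positivity
  exact div_pos h1 h2

lemma zeta_le (k : EK p Gf) : zeta p hp Gf k ≤ smin p hp / 20 := by
  have h1 := smin_pos p hp
  rw [zeta, div_le_div_iff₀ (by positivity) (by norm_num)]
  have : (1:ℝ) ≤ (kidx p Gf k + 1 : ℝ) := by
    have : (0:ℕ) ≤ kidx p Gf k := Nat.zero_le _
    push_cast
    linarith [Nat.cast_nonneg (α := ℝ) (kidx p Gf k)]
  nlinarith

lemma zeta_inj : Function.Injective (zeta p hp Gf) := by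
  intro k k' h
  apply kidx_inj p hp Gf
  have h1 := smin_pos p hp
  rw [zeta, zeta, div_eq_div_iff (by positivity) (by positivity)] at h
  have h2 : (20:ℝ) * ((kidx p Gf k' : ℝ) + 1) = 20 * ((kidx p Gf k : ℝ) + 1) :=
    mul_left_cancel₀ (ne_of_gt h1) h
  have h3 : (kidx p Gf k : ℝ) = (kidx p Gf k' : ℝ) := by linarith
  exact_mod_cast h3

def PK (k : EK p Gf) : E3' := (X k.1.1 + (8/10) * S k.1.1, 0, zeta p hp Gf k)
def QK (k : EK p Gf) : E3' := (X k.1.2 + (8/10) * S k.1.2, 0, zeta p hp Gf k)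

/-- One removed punctured line. -/
def Lset (k : EK p Gf) : Set E3' :=
  {y : E3' | y.2.1 = 0 ∧ y.2.2 = zeta p hp Gf k ∧
    y ≠ PK p hp Gf k ∧ y ≠ QK p hp Gf k}

/-- The removed set: for each non-tree edge, a full horizontal line minus the two endpoints. -/
def RR : Set E3' := ⋃ k : EK p Gf, Lset p hp Gf k

/-- The final regions. -/
def F1 (i : Fin n) : Set E3' := F0 p hp i \ RR p hp Gf

lemma notR_y {y : E3'} (h : y.2.1 ≠ 0) : y ∉ RR p hp Gf := by
  intro hy
  obtain ⟨s, ⟨k, rfl⟩, hs⟩ := hy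
  exact h hs.1

lemma notR_zle {y : E3'} (h : y.2.2 ≤ 0) : y ∉ RR p hp Gf := by
  intro hy
  obtain ⟨s, ⟨k, rfl⟩, hs⟩ := hy
  have := zeta_pos p hp Gf k
  rw [hs.2.1] at h
  linarith

lemma notR_zbig {y : E3'} (h : (1/10) * smin p hp ≤ y.2.2) : y ∉ RR p hp Gf := by
  intro hy
  obtain ⟨s, ⟨k, rfl⟩, hs⟩ := hy
  have h1 := zeta_le p hp Gf k
  have h2 := smin_pos p hp
  rw [hs.2.1] at h
  linarith

lemma PK_notR (k : EK p Gf) : PK p hp Gf k ∉ RR p hp Gf := by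
  intro hy
  obtain ⟨s, ⟨k', rfl⟩, hs⟩ := hy
  have hz : zeta p hp Gf k = zeta p hp Gf k' := hs.2.1
  have : k = k' := zeta_inj p hp Gf hz
  exact hs.2.2.1 (by rw [this])

lemma QK_notR (k : EK p Gf) : QK p hp Gf k ∉ RR p hp Gf := by
  intro hy
  obtain ⟨s, ⟨k', rfl⟩, hs⟩ := hy
  have hz : zeta p hp Gf k = zeta p hp Gf k' := hs.2.1
  have : k = k' := zeta_inj p hp Gf hz
  exact hs.2.2.2 (by rw [this])

lemma ctr_eq (i : Fin n) : C i = ((X i, 0, 0) : E3') := rfl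

omit [NeZero n] hp in
lemma dist_pt (a b c x : ℝ) : dist ((a,b,c) : E3') ((x,0,0) : E3') = max |a-x| (max |b| |c|) := by
  rw [dist3']
  norm_num

/-- Membership of face points. -/
lemma face_mem {i : Fin n} {ζ : ℝ} (h0 : 0 ≤ ζ) (h1 : ζ ≤ (8/10) * S i) :
    ((X i + (8/10) * S i, 0, ζ) : E3') ∈ F0 p hp i := by
  have hsi := sg_pos p hp i
  constructor
  · rw [ctr_eq, dist_pt]
    have e1 : X i + (8/10)*S i - X i = (8/10)*S i := by ring
    rw [e1, abs_of_nonneg (by linarith), abs_zero, abs_of_nonneg h0]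
    exact max_le le_rfl (max_le (by linarith) h1)
  · intro j hj0 hpj
    rw [ctr_eq, dist_pt]
    have hsp1 := SP1 p hp hj0
    rw [hpj] at hsp1
    have habs : dist (C j) (C i) = |X j - X i| := by rw [dist_ctr]
    have h2 : X j - X i ≤ |X j - X i| := le_abs_self _
    have h3 : X i + (8/10)*S i - X j ≤ |X i + (8/10)*S i - X j| := le_abs_self _
    have h4 : |X i + (8/10)*S i - X j| ≤ max |X i + (8/10)*S i - X j| (max |0| |ζ|) :=
      le_max_left _ _
    have h5 := sg_pos p hp j
    linarith

lemma tree_sight_a {c : Fin n} (hc0 : c ≠ 0) :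
    ((X c, (9/10) * S c, 0) : E3') ∈ F0 p hp (p c) := by
  have hsp1 := SP1 p hp hc0
  have hsc := sg_pos p hp c
  have hspc := sg_pos p hp (p c)
  have hdc : dist (C c) (C (p c)) = |X c - X (p c)| := dist_ctr p hp c (p c)
  have hd0 : (0:ℝ) ≤ dist (C c) (C (p c)) := dist_nonneg
  constructor
  · rw [ctr_eq, dist_pt]
    have h1 : |X c - X (p c)| ≤ (8/10) * S (p c) := by rw [← hdc]; linarith
    rw [abs_of_nonneg (by linarith : (0:ℝ) ≤ (9/10) * S c), abs_zero]
    exact max_le h1 (max_le (by linarith) (by linarith))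
  · intro j hj0 hpj
    by_cases hjc : j = c
    · subst hjc
      rw [ctr_eq, dist_pt]
      have h2 : (9/10) * S j ≤ |(9/10) * S j| := le_abs_self _
      exact h2.trans ((le_max_left _ _).trans (le_max_right _ _))
    · have hsp2 := SP2 p hp hj0 hc0 hjc (hpj.trans rfl)
      rw [ctr_eq, dist_pt]
      have hdj : dist (C j) (C c) = |X j - X c| := dist_ctr p hp j c
      have hsj := sg_pos p hp j
      have h1 : (9/10) * S j ≤ |X c - X j| := by
        rw [abs_sub_comm, ← hdj]
        linarith
      exact h1.trans (le_max_left _ _)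

lemma tree_sight_b {c : Fin n} (hc0 : c ≠ 0) :
    ((X c, (8/10) * S c, 0) : E3') ∈ F0 p hp c := by
  have hsc := sg_pos p hp c
  constructor
  · rw [ctr_eq, dist_pt]
    have h8 : |(8/10) * S c| = (8/10) * S c := abs_of_nonneg (by linarith)
    simp only [sub_self, abs_zero, h8]
    exact max_le (by linarith) (max_le le_rfl (by linarith))
  · intro j hj0 hpj
    have hsp1 := SP1 p hp hj0
    rw [hpj] at hsp1
    have hd0 : (0:ℝ) ≤ dist (C j) (C c) := dist_nonneg
    have hsj := sg_pos p hp j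
    rw [ctr_eq, dist_pt]
    have h2 : ((8/10) * S c : ℝ) ≤ |(8/10) * S c| := le_abs_self _
    have h1 : (9/10) * S j ≤ |(8/10) * S c| := by linarith
    exact h1.trans ((le_max_left _ _).trans (le_max_right _ _))

lemma tree_sight_mid {c : Fin n} (hc0 : c ≠ 0) {z : Fin n} (hz1 : z ≠ p c) (hz2 : z ≠ c)
    {y : E3'} (hy : y ∈ segment ℝ ((X c, (9/10) * S c, 0) : E3') ((X c, (8/10) * S c, 0) : E3')) :
    y ∉ F0 p hp z := by
  have hsc := sg_pos p hp c
  obtain ⟨t, ht0, ht1, hyt⟩ := seg_param_of_mem hy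
  have hy1 : y.1 = X c := by rw [hyt, seg_comp1]; ring
  have hy2 : y.2.1 = (9/10) * S c + t * (-(1/10) * S c) := by
    rw [hyt, seg_comp2]; ring
  have hy3 : y.2.2 = 0 := by rw [hyt, seg_comp3]; ring
  have hyeq : y = ((X c, (9/10) * S c + t * (-(1/10) * S c), 0) : E3') := by
    rw [← hy1, ← hy2, ← hy3]
  have hpos : (0:ℝ) ≤ (9/10) * S c + t * (-(1/10) * S c) := by nlinarith
  have hydist : dist y (C c) = (9/10) * S c + t * (-(1/10) * S c) := by
    rw [hyeq, ctr_eq, dist_pt]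
    simp only [sub_self, abs_zero]
    rw [abs_of_nonneg hpos, max_eq_left hpos, max_eq_right hpos]
  rcases eq_or_lt_of_le ht0 with h0 | h0
  · intro hyz
    have hmm : y ∈ F0 p hp (p c) := by
      have h99 : (9/10) * S c + 0 * (-(1/10) * S c) = (9/10) * S c := by ring
      rw [hyeq, ← h0, h99]
      exact tree_sight_a p hp hc0
    exact F0_disj p hp hz1 hyz hmm
  · rcases eq_or_lt_of_le ht1 with h1 | h1
    · intro hyz
      have hmm : y ∈ F0 p hp c := by
        have h99 : (9/10) * S c + 1 * (-(1/10) * S c) = (8/10) * S c := by ring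
        rw [hyeq, h1, h99]
        exact tree_sight_b p hp hc0
      exact F0_disj p hp hz2 hyz hmm
    · apply PL p hp hz2 hz1
      · rw [hydist]; nlinarith
      · rw [hydist]; nlinarith

lemma PK_mem (k : EK p Gf) : PK p hp Gf k ∈ F0 p hp k.1.1 := by
  have h1 := zeta_pos p hp Gf k
  have h2 := zeta_le p hp Gf k
  have h3 := smin_le p hp k.1.1
  have h4 := sg_pos p hp k.1.1
  have h5 := smin_pos p hp
  exact face_mem p hp (by linarith) (by linarith)

lemma QK_mem (k : EK p Gf) : QK p hp Gf k ∈ F0 p hp k.1.2 := by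
  have h1 := zeta_pos p hp Gf k
  have h2 := zeta_le p hp Gf k
  have h3 := smin_le p hp k.1.2
  have h4 := sg_pos p hp k.1.2
  have h5 := smin_pos p hp
  exact face_mem p hp (by linarith) (by linarith)

lemma eq_of_F0_mem {i j : Fin n} {y : E3'} (hi : y ∈ F0 p hp i) (hj : y ∈ F0 p hp j) :
    i = j := by
  by_contra h
  exact F0_disj p hp h hi hj

/-- Pre-removal blocking. -/
lemma blocker {u w : Fin n} (huw : u ≠ w)
    (ht1 : ¬(u ≠ 0 ∧ p u = w)) (ht2 : ¬(w ≠ 0 ∧ p w = u))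
    {a b : E3'} (ha : a ∈ F0 p hp u) (hb : b ∈ F0 p hp w) :
    ∃ z : Fin n, z ≠ u ∧ z ≠ w ∧ ∃ x₁ x₂ : E3', x₁ ∈ segment ℝ a b ∧ x₂ ∈ segment ℝ a b ∧
      x₁ ≠ x₂ ∧ ∀ y ∈ segment ℝ x₁ x₂, y ∈ F0 p hp z := by
  by_cases hdwu : Desc p w u
  · -- w strictly below u
    obtain ⟨c, hc0, hpc, hdc⟩ := child_of_desc p hp hdwu (Ne.symm huw)
    have hcw : c ≠ w := by
      intro h
      rw [h] at hc0 hpc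
      exact ht2 ⟨hc0, hpc⟩
    have hcu : c ≠ u := by
      intro h
      have := hp.2 c hc0
      rw [hpc, h] at this
      exact lt_irrefl u this
    have hsc := sg_pos p hp c
    have hsw := sg_pos p hp w
    have hA : dist b (C c) < (7/10) * S c := by
      have hq := SQ2 p hp hdc (Ne.symm hcw)
      have h3 := dist_triangle b (C w) (C c)
      have h4 := hb.1
      linarith
    have hB : (8/10) * S c < dist a (C c) := by
      have := ha.2 c hc0 hpc
      linarith
    obtain ⟨x₁, x₂, hx₁, hx₂, hne, hann⟩ := core hA (by linarith) hB
    rw [← segment_symm] at hx₁ hx₂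
    refine ⟨c, hcu, hcw, x₁, x₂, hx₁, hx₂, hne, ?_⟩
    intro y hy
    obtain ⟨l, r⟩ := hann y hy
    exact AN1 p hp l r
  · by_cases hduw : Desc p u w
    · -- u strictly below w
      obtain ⟨c, hc0, hpc, hdc⟩ := child_of_desc p hp hduw huw
      have hcu : c ≠ u := by
        intro h
        rw [h] at hc0 hpc
        exact ht1 ⟨hc0, hpc⟩
      have hcw : c ≠ w := by
        intro h
        have := hp.2 c hc0
        rw [hpc, h] at this
        exact lt_irrefl w this
      have hsc := sg_pos p hp c
      have hsu := sg_pos p hp u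
      have hA : dist a (C c) < (7/10) * S c := by
        have hq := SQ2 p hp hdc (Ne.symm hcu)
        have h3 := dist_triangle a (C u) (C c)
        have h4 := ha.1
        linarith
      have hB : (8/10) * S c < dist b (C c) := by
        have := hb.2 c hc0 hpc
        linarith
      obtain ⟨x₁, x₂, hx₁, hx₂, hne, hann⟩ := core hA (by linarith) hB
      refine ⟨c, hcu, hcw, x₁, x₂, hx₁, hx₂, hne, ?_⟩
      intro y hy
      obtain ⟨l, r⟩ := hann y hy
      exact AN1 p hp l r
    · -- incomparable
      obtain ⟨z, c₁, c₂, hc₁0, hc₂0, hpc₁, hpc₂, hcc, hd₁, hd₂⟩ :=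
        lca_aux p hp (u.val + w.val) u w le_rfl hduw hdwu
      have hsc₁ := sg_pos p hp c₁
      have hsc₂ := sg_pos p hp c₂
      have hsu := sg_pos p hp u
      have hsw := sg_pos p hp w
      have hA : dist a (C c₁) < (9/10) * S c₁ := by
        by_cases huc : u = c₁
        · have := ha.1
          rw [huc] at this
          linarith
        · have hq := SQ2 p hp hd₁ huc
          have h3 := dist_triangle a (C u) (C c₁)
          have h4 := ha.1
          linarith
      have hB : S c₁ < dist b (C c₁) := by
        have hq1 := SQ1 p hp hd₂
        have hq2 := SP2 p hp hc₁0 hc₂0 hcc (hpc₁.trans hpc₂.symm)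
        have h3 := dist_triangle b (C w) (C c₂)
        have h4 := dist_triangle (C c₁) b (C c₂)
        have h5 := dist_comm (C c₁) b
        have h6 := hb.1
        linarith
      obtain ⟨x₁, x₂, hx₁, hx₂, hne, hann⟩ := core hA (by linarith) hB
      have hzu : z ≠ u := by
        have h1 : c₁ ≤ u := desc_le p hp hd₁
        have h2 : p c₁ < c₁ := hp.2 c₁ hc₁0
        rw [← hpc₁]
        exact ne_of_lt (lt_of_lt_of_le h2 h1)
      have hzw : z ≠ w := by
        have h1 : c₂ ≤ w := desc_le p hp hd₂
        have h2 : p c₂ < c₂ := hp.2 c₂ hc₂0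
        rw [← hpc₂]
        exact ne_of_lt (lt_of_lt_of_le h2 h1)
      refine ⟨z, hzu, hzw, x₁, x₂, hx₁, hx₂, hne, ?_⟩
      intro y hy
      obtain ⟨l, r⟩ := hann y hy
      rw [← hpc₁]
      exact AN2 p hp hc₁0 l r

lemma edge_sight_mid (k : EK p Gf) {z : Fin n} (hz1 : z ≠ k.1.1) (hz2 : z ≠ k.1.2)
    {y : E3'} (hy : y ∈ segment ℝ (PK p hp Gf k) (QK p hp Gf k)) :
    y ∉ F1 p hp Gf z := by
  intro hyz
  obtain ⟨t, ht0, ht1, hyt⟩ := seg_param_of_mem hy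
  have hy2 : y.2.1 = 0 := by
    rw [hyt, seg_comp2]
    show (0:ℝ) + t * ((0:ℝ) - 0) = 0
    ring
  have hy3 : y.2.2 = zeta p hp Gf k := by
    rw [hyt, seg_comp3]
    show zeta p hp Gf k + t * (zeta p hp Gf k - zeta p hp Gf k) = zeta p hp Gf k
    ring
  by_cases hP : y = PK p hp Gf k
  · have h1 : y ∈ F0 p hp k.1.1 := by rw [hP]; exact PK_mem p hp Gf k
    exact hz1 (eq_of_F0_mem p hp hyz.1 h1)
  · by_cases hQ : y = QK p hp Gf k
    · have h1 : y ∈ F0 p hp k.1.2 := by rw [hQ]; exact QK_mem p hp Gf k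
      exact hz2 (eq_of_F0_mem p hp hyz.1 h1)
    · exact hyz.2 (Set.mem_iUnion.mpr ⟨k, hy2, hy3, hP, hQ⟩)

/-- No sightline between non-adjacent vertices. -/
lemma no_sight (hGadj : ∀ i : Fin n, i ≠ 0 → Gf.Adj (p i) i)
    {u w : Fin n} (huw : u ≠ w) (hnadj : ¬ Gf.Adj u w)
    {a b : E3'} (ha : a ∈ F1 p hp Gf u) (hb : b ∈ F1 p hp Gf w)
    (hseg : ∀ z, z ≠ u → z ≠ w → segment ℝ a b ∩ F1 p hp Gf z = ∅) : False := by
  have ht1 : ¬(u ≠ 0 ∧ p u = w) := by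
    rintro ⟨h1, h2⟩
    exact hnadj (h2 ▸ (hGadj u h1)).symm
  have ht2 : ¬(w ≠ 0 ∧ p w = u) := by
    rintro ⟨h1, h2⟩
    exact hnadj (h2 ▸ (hGadj w h1))
  obtain ⟨z, hzu, hzw, x₁, x₂, hx₁, hx₂, hxne, hann⟩ :=
    blocker p hp huw ht1 ht2 ha.1 hb.1
  have hsub : segment ℝ x₁ x₂ ⊆ segment ℝ a b :=
    (convex_segment a b).segment_subset hx₁ hx₂
  have hRR : segment ℝ x₁ x₂ ⊆ RR p hp Gf := by
    intro y hy
    by_contra hyR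
    have : y ∈ segment ℝ a b ∩ F1 p hp Gf z := ⟨hsub hy, hann y hy, hyR⟩
    rw [hseg z hzu hzw] at this
    exact this
  have hinf : (segment ℝ x₁ x₂).Infinite := seg_infinite hxne
  have hex : ∃ k : EK p Gf, ((segment ℝ x₁ x₂) ∩ Lset p hp Gf k).Infinite := by
    by_contra hall
    push_neg at hall
    have hcov : segment ℝ x₁ x₂ = ⋃ k : EK p Gf, (segment ℝ x₁ x₂ ∩ Lset p hp Gf k) := by
      apply Set.eq_of_subset_of_subset
      · intro y hy
        obtain ⟨s, ⟨k, rfl⟩, hs⟩ := hRR hy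
        exact Set.mem_iUnion.mpr ⟨k, hy, hs⟩
      · exact Set.iUnion_subset fun k => Set.inter_subset_left
    rw [hcov] at hinf
    exact hinf (Set.finite_iUnion hall)
  obtain ⟨k, hkinf⟩ := hex
  obtain ⟨y₁, hy₁, y₂, hy₂, hyne⟩ := hkinf.nontrivial
  obtain ⟨t₁, _, _, hyt₁⟩ := seg_param_of_mem (hsub hy₁.1)
  obtain ⟨t₂, _, _, hyt₂⟩ := seg_param_of_mem (hsub hy₂.1)
  have htne : t₁ ≠ t₂ := by
    intro h
    exact hyne (by rw [hyt₁, hyt₂, h])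
  have e1 : a.2.1 + t₁ * (b.2.1 - a.2.1) = 0 := by
    rw [← seg_comp2 t₁ a b, ← hyt₁]; exact hy₁.2.1
  have e2 : a.2.1 + t₂ * (b.2.1 - a.2.1) = 0 := by
    rw [← seg_comp2 t₂ a b, ← hyt₂]; exact hy₂.2.1
  have e3 : a.2.2 + t₁ * (b.2.2 - a.2.2) = zeta p hp Gf k := by
    rw [← seg_comp3 t₁ a b, ← hyt₁]; exact hy₁.2.2.1
  have e4 : a.2.2 + t₂ * (b.2.2 - a.2.2) = zeta p hp Gf k := by
    rw [← seg_comp3 t₂ a b, ← hyt₂]; exact hy₂.2.2.1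
  have hd1 : b.2.1 - a.2.1 = 0 := by
    rcases mul_eq_zero.mp (show (t₁ - t₂) * (b.2.1 - a.2.1) = 0 by nlinarith) with h | h
    · exact absurd (by linarith : t₁ = t₂) htne
    · exact h
  have hd2 : b.2.2 - a.2.2 = 0 := by
    rcases mul_eq_zero.mp (show (t₁ - t₂) * (b.2.2 - a.2.2) = 0 by nlinarith) with h | h
    · exact absurd (by linarith : t₁ = t₂) htne
    · exact h
  have ha21 : a.2.1 = 0 := by nlinarith
  have ha22 : a.2.2 = zeta p hp Gf k := by nlinarith
  have hb21 : b.2.1 = 0 := by nlinarith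
  have hb22 : b.2.2 = zeta p hp Gf k := by nlinarith
  have haPQ : a = PK p hp Gf k ∨ a = QK p hp Gf k := by
    by_contra hcon
    push_neg at hcon
    exact ha.2 (Set.mem_iUnion.mpr ⟨k, ha21, ha22, hcon.1, hcon.2⟩)
  have hbPQ : b = PK p hp Gf k ∨ b = QK p hp Gf k := by
    by_contra hcon
    push_neg at hcon
    exact hb.2 (Set.mem_iUnion.mpr ⟨k, hb21, hb22, hcon.1, hcon.2⟩)
  have hab : a ≠ b := by
    intro h
    exact F0_disj p hp huw ha.1 (h ▸ hb.1)
  have hadjk := k.2.1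
  rcases haPQ with haP | haQ <;> rcases hbPQ with hbP | hbQ
  · exact hab (haP.trans hbP.symm)
  · have h1 : u = k.1.1 := eq_of_F0_mem p hp ha.1 (by rw [haP]; exact PK_mem p hp Gf k)
    have h2 : w = k.1.2 := eq_of_F0_mem p hp hb.1 (by rw [hbQ]; exact QK_mem p hp Gf k)
    exact hnadj (h1 ▸ h2 ▸ hadjk)
  · have h1 : u = k.1.2 := eq_of_F0_mem p hp ha.1 (by rw [haQ]; exact QK_mem p hp Gf k)
    have h2 : w = k.1.1 := eq_of_F0_mem p hp hb.1 (by rw [hbP]; exact PK_mem p hp Gf k)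
    exact hnadj (h1 ▸ h2 ▸ hadjk.symm)
  · exact hab (haQ.trans hbQ.symm)

lemma F0_iff {i : Fin n} {y : E3'} : y ∈ F0 p hp i ↔
    (max |y.1 - X i| (max |y.2.1| |y.2.2|) ≤ (8/10) * S i ∧
      ∀ j : Fin n, j ≠ 0 → p j = i →
        (9/10) * S j ≤ max |y.1 - X j| (max |y.2.1| |y.2.2|)) := by
  have hrw : ∀ j : Fin n, dist y (C j) = max |y.1 - X j| (max |y.2.1| |y.2.2|) := by
    intro j
    rw [dist3']
    have : (C j) = ((X j, 0, 0) : E3') := rfl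
    rw [this]
    norm_num
  constructor
  · rintro ⟨h1, h2⟩
    exact ⟨by rw [← hrw i]; exact h1, fun j hj0 hpj => by rw [← hrw j]; exact h2 j hj0 hpj⟩
  · rintro ⟨h1, h2⟩
    exact ⟨by rw [hrw i]; exact h1, fun j hj0 hpj => by rw [hrw j]; exact h2 j hj0 hpj⟩

lemma F0_mono {i : Fin n} {y y' : E3'} (hy : y ∈ F0 p hp i)
    (h1 : y'.1 = y.1) (h2 : |y'.2.1| ≤ (8/10) * S i) (h2' : |y.2.1| ≤ |y'.2.1|)
    (h3 : |y'.2.2| ≤ (8/10) * S i) (h3' : |y.2.2| ≤ |y'.2.2|) : y' ∈ F0 p hp i := by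
  rw [F0_iff] at hy ⊢
  obtain ⟨hc, hcav⟩ := hy
  constructor
  · rw [h1]
    exact max_le (le_trans (le_max_left _ _) hc) (max_le h2 h3)
  · intro j hj0 hpj
    refine le_trans (hcav j hj0 hpj) ?_
    rw [h1]
    exact max_le_max le_rfl (max_le_max h2' h3')

lemma face_zy_mem {i : Fin n} {y : E3'} (h1 : |y.1 - X i| ≤ (8/10) * S i)
    (h2 : |y.2.1| ≤ (8/10) * S i) (h3 : |y.2.2| ≤ (8/10) * S i)
    (h4 : |y.2.1| = (8/10) * S i ∨ |y.2.2| = (8/10) * S i) : y ∈ F0 p hp i := by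
  rw [F0_iff]
  refine ⟨max_le h1 (max_le h2 h3), ?_⟩
  intro j hj0 hpj
  have hsp1 := SP1 p hp hj0
  rw [hpj] at hsp1
  have hd0 : (0:ℝ) ≤ dist (C j) (C i) := dist_nonneg
  have hsj := sg_pos p hp j
  have key : (9/10) * S j ≤ max |y.2.1| |y.2.2| := by
    rcases h4 with h | h
    · exact le_trans (by linarith [h.ge]) (le_max_left _ _)
    · exact le_trans (by linarith [h.ge]) (le_max_right _ _)
  exact le_trans key (le_max_right _ _)

def TP (i : Fin n) : E3' := (X i, (8/10) * S i, (8/10) * S i)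

lemma TP_mem (i : Fin n) : TP p hp i ∈ F1 p hp Gf i := by
  have hsi := sg_pos p hp i
  constructor
  · apply face_zy_mem p hp
    · simp only [TP, sub_self, abs_zero]
      linarith
    · rw [show (TP p hp i).2.1 = (8/10) * S i from rfl, abs_of_nonneg (by linarith)]
    · rw [show (TP p hp i).2.2 = (8/10) * S i from rfl, abs_of_nonneg (by linarith)]
    · left
      rw [show (TP p hp i).2.1 = (8/10) * S i from rfl, abs_of_nonneg (by linarith)]
  · exact notR_y p hp Gf (by show (8/10) * S i ≠ 0; linarith)

omit hp in
lemma seg_tuple (t p1 p2 p3 q1 q2 q3 : ℝ) :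
    ((p1,p2,p3) : E3') + t • (((q1,q2,q3) : E3') - (p1,p2,p3))
      = ((p1 + t*(q1-p1), p2 + t*(q2-p2), p3 + t*(q3-p3)) : E3') := by
  exact Prod.ext_iff.mpr ⟨seg_comp1 t _ _, Prod.ext_iff.mpr ⟨seg_comp2 t _ _, seg_comp3 t _ _⟩⟩

lemma F0_bounds1 {i : Fin n} {y : E3'} (hy : y ∈ F0 p hp i) : |y.1 - X i| ≤ (8/10) * S i :=
  le_trans (le_max_left _ _) ((F0_iff p hp).mp hy).1
lemma F0_bounds2 {i : Fin n} {y : E3'} (hy : y ∈ F0 p hp i) : |y.2.1| ≤ (8/10) * S i :=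
  le_trans ((le_max_left _ _).trans (le_max_right _ _)) ((F0_iff p hp).mp hy).1
lemma F0_bounds3 {i : Fin n} {y : E3'} (hy : y ∈ F0 p hp i) : |y.2.2| ≤ (8/10) * S i :=
  le_trans ((le_max_right _ _).trans (le_max_right _ _)) ((F0_iff p hp).mp hy).1

lemma ascend {i : Fin n} {α β' γ' : ℝ} (hmem : ((α,β',γ') : E3') ∈ F0 p hp i)
    (hβ : β' ≠ 0) (hγ : 0 ≤ γ') :
    JoinedIn (F1 p hp Gf i) (α,β',γ') (α, β', (8/10) * S i) := by
  have hsi := sg_pos p hp i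
  have h3 : |γ'| ≤ (8/10) * S i := F0_bounds3 p hp hmem
  have hγr : γ' ≤ (8/10) * S i := le_trans (le_abs_self _) h3
  apply JoinedIn.of_seg
  intro t ht0 ht1
  rw [seg_tuple]
  have hz1 : γ' ≤ γ' + t*((8/10)*S i - γ') := by nlinarith
  have hz2 : γ' + t*((8/10)*S i - γ') ≤ (8/10)*S i := by nlinarith
  constructor
  · apply F0_mono p hp hmem (by show α + t*(α-α) = α; ring) ?_ ?_ ?_ ?_
    · show |β' + t*(β'-β')| ≤ _
      rw [show β' + t*(β'-β') = β' by ring]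
      exact F0_bounds2 p hp hmem
    · show |β'| ≤ |β' + t*(β'-β')|
      rw [show β' + t*(β'-β') = β' by ring]
    · show |γ' + t*((8/10)*S i - γ')| ≤ _
      rw [abs_of_nonneg (by linarith)]
      exact hz2
    · show |γ'| ≤ |γ' + t*((8/10)*S i - γ')|
      rw [abs_of_nonneg hγ, abs_of_nonneg (show (0:ℝ) ≤ γ' + t*((8/10)*S i - γ') by linarith)]
      exact hz1
  · apply notR_y p hp Gf
    show β' + t*(β'-β') ≠ 0
    rw [show β' + t*(β'-β') = β' by ring]
    exact hβ

lemma descend {i : Fin n} {α β' γ' : ℝ} (hmem : ((α,β',γ') : E3') ∈ F0 p hp i)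
    (hγ : γ' ≤ 0) :
    JoinedIn (F1 p hp Gf i) (α,β',γ') (α, β', -((8/10) * S i)) := by
  have hsi := sg_pos p hp i
  have h3 : |γ'| ≤ (8/10) * S i := F0_bounds3 p hp hmem
  have hγr : -((8/10) * S i) ≤ γ' := by
    rw [abs_le] at h3
    exact h3.1
  apply JoinedIn.of_seg
  intro t ht0 ht1
  rw [seg_tuple]
  have hz1 : γ' + t*(-((8/10)*S i) - γ') ≤ γ' := by nlinarith
  have hz2 : -((8/10)*S i) ≤ γ' + t*(-((8/10)*S i) - γ') := by nlinarith
  constructor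
  · apply F0_mono p hp hmem (by show α + t*(α-α) = α; ring) ?_ ?_ ?_ ?_
    · show |β' + t*(β'-β')| ≤ _
      rw [show β' + t*(β'-β') = β' by ring]
      exact F0_bounds2 p hp hmem
    · show |β'| ≤ |β' + t*(β'-β')|
      rw [show β' + t*(β'-β') = β' by ring]
    · show |γ' + t*(-((8/10)*S i) - γ')| ≤ _
      rw [abs_of_nonpos (by linarith)]
      linarith
    · show |γ'| ≤ |γ' + t*(-((8/10)*S i) - γ')|
      rw [abs_of_nonpos hγ, abs_of_nonpos (show γ' + t*(-((8/10)*S i) - γ') ≤ 0 by linarith)]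
      linarith
  · apply notR_zle p hp Gf
    show γ' + t*(-((8/10)*S i) - γ') ≤ 0
    linarith

lemma topmove {i : Fin n} {α β' : ℝ} (hmem : ((α, β', (8/10) * S i) : E3') ∈ F0 p hp i) :
    JoinedIn (F1 p hp Gf i) (α, β', (8/10) * S i) (TP p hp i) := by
  have hsi := sg_pos p hp i
  have hsmin := smin_pos p hp
  have hsminle := smin_le p hp i
  have h1 := F0_bounds1 p hp hmem
  have h2 := F0_bounds2 p hp hmem
  apply JoinedIn.of_seg
  intro t ht0 ht1
  rw [show TP p hp i = ((X i, (8/10)*S i, (8/10)*S i) : E3') from rfl, seg_tuple]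
  have e3 : (8/10)*S i + t*((8/10)*S i - (8/10)*S i) = (8/10)*S i := by ring
  constructor
  · apply face_zy_mem p hp
    · show |α + t*(X i - α) - X i| ≤ _
      rw [show α + t*(X i - α) - X i = (1-t)*(α - X i) by ring, abs_mul,
        abs_of_nonneg (by linarith : (0:ℝ) ≤ 1 - t)]
      calc (1-t) * |α - X i| ≤ 1 * |α - X i| := by
            apply mul_le_mul_of_nonneg_right (by linarith) (abs_nonneg _)
        _ ≤ (8/10) * S i := by rw [one_mul]; exact h1
    · show |β' + t*((8/10)*S i - β')| ≤ _
      calc |β' + t*((8/10)*S i - β')| = |(1-t)*β' + t*((8/10)*S i)| := by ring_nf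
        _ ≤ |(1-t)*β'| + |t*((8/10)*S i)| := abs_add_le _ _
        _ ≤ (8/10)*S i := by
            rw [abs_mul, abs_mul, abs_of_nonneg (by linarith : (0:ℝ) ≤ 1 - t),
              abs_of_nonneg ht0, abs_of_nonneg (by linarith : (0:ℝ) ≤ (8/10)*S i)]
            nlinarith [abs_nonneg β']
    · show |(8/10)*S i + t*((8/10)*S i - (8/10)*S i)| ≤ _
      rw [e3, abs_of_nonneg (by linarith)]
    · right
      show |(8/10)*S i + t*((8/10)*S i - (8/10)*S i)| = _
      rw [e3, abs_of_nonneg (by linarith)]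
  · apply notR_zbig p hp Gf
    show (1/10) * smin p hp ≤ (8/10)*S i + t*((8/10)*S i - (8/10)*S i)
    rw [e3]
    linarith

lemma botmove {i : Fin n} {α β' : ℝ} (hmem : ((α, β', -((8/10) * S i)) : E3') ∈ F0 p hp i) :
    JoinedIn (F1 p hp Gf i) (α, β', -((8/10) * S i)) (X i, (8/10)*S i, -((8/10) * S i)) := by
  have hsi := sg_pos p hp i
  have h1 := F0_bounds1 p hp hmem
  have h2 := F0_bounds2 p hp hmem
  apply JoinedIn.of_seg
  intro t ht0 ht1
  rw [seg_tuple]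
  have e3 : -((8/10)*S i) + t*(-((8/10)*S i) - -((8/10)*S i)) = -((8/10)*S i) := by ring
  constructor
  · apply face_zy_mem p hp
    · show |α + t*(X i - α) - X i| ≤ _
      rw [show α + t*(X i - α) - X i = (1-t)*(α - X i) by ring, abs_mul,
        abs_of_nonneg (by linarith : (0:ℝ) ≤ 1 - t)]
      calc (1-t) * |α - X i| ≤ 1 * |α - X i| := by
            apply mul_le_mul_of_nonneg_right (by linarith) (abs_nonneg _)
        _ ≤ (8/10) * S i := by rw [one_mul]; exact h1
    · show |β' + t*((8/10)*S i - β')| ≤ _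
      calc |β' + t*((8/10)*S i - β')| = |(1-t)*β' + t*((8/10)*S i)| := by ring_nf
        _ ≤ |(1-t)*β'| + |t*((8/10)*S i)| := abs_add_le _ _
        _ ≤ (8/10)*S i := by
            rw [abs_mul, abs_mul, abs_of_nonneg (by linarith : (0:ℝ) ≤ 1 - t),
              abs_of_nonneg ht0, abs_of_nonneg (by linarith : (0:ℝ) ≤ (8/10)*S i)]
            nlinarith [abs_nonneg β']
    · show |(-((8/10)*S i)) + t*(-((8/10)*S i) - -((8/10)*S i))| ≤ _
      rw [e3, abs_of_nonpos (by linarith)]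
      linarith
    · right
      show |(-((8/10)*S i)) + t*(-((8/10)*S i) - -((8/10)*S i))| = _
      rw [e3, abs_of_nonpos (by linarith)]
      ring
  · apply notR_zle p hp Gf
    show (-((8/10)*S i)) + t*(-((8/10)*S i) - -((8/10)*S i)) ≤ 0
    rw [e3]
    linarith

lemma sidemove (i : Fin n) :
    JoinedIn (F1 p hp Gf i) (X i, (8/10)*S i, -((8/10) * S i)) (TP p hp i) := by
  have hsi := sg_pos p hp i
  apply JoinedIn.of_seg
  intro t ht0 ht1
  rw [show TP p hp i = ((X i, (8/10)*S i, (8/10)*S i) : E3') from rfl, seg_tuple]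
  have e2 : (8/10)*S i + t*((8/10)*S i - (8/10)*S i) = (8/10)*S i := by ring
  constructor
  · apply face_zy_mem p hp
    · show |X i + t*(X i - X i) - X i| ≤ _
      rw [show X i + t*(X i - X i) - X i = 0 by ring, abs_zero]
      linarith
    · show |(8/10)*S i + t*((8/10)*S i - (8/10)*S i)| ≤ _
      rw [e2, abs_of_nonneg (by linarith)]
    · show |(-((8/10)*S i)) + t*((8/10)*S i - -((8/10)*S i))| ≤ _
      rw [abs_le]
      constructor <;> nlinarith
    · left
      show |(8/10)*S i + t*((8/10)*S i - (8/10)*S i)| = _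
      rw [e2, abs_of_nonneg (by linarith)]
  · apply notR_y p hp Gf
    show (8/10)*S i + t*((8/10)*S i - (8/10)*S i) ≠ 0
    rw [e2]
    linarith

lemma joined_TP {i : Fin n} {a : E3'} (ha : a ∈ F1 p hp Gf i) :
    JoinedIn (F1 p hp Gf i) a (TP p hp i) := by
  obtain ⟨α, β, γ⟩ := a
  have hsi := sg_pos p hp i
  obtain ⟨haF, haR⟩ := ha
  by_cases hz : 0 < γ
  · by_cases hy0 : β = 0
    · subst hy0
      have nudge : JoinedIn (F1 p hp Gf i) (α, (0:ℝ), γ) (α, (8/10)*S i, γ) := by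
        apply JoinedIn.of_seg
        intro t ht0 ht1
        rw [seg_tuple]
        have e3 : γ + t*(γ-γ) = γ := by ring
        constructor
        · apply F0_mono p hp haF (by show α + t*(α-α) = α; ring) ?_ ?_ ?_ ?_
          · show |0 + t*((8/10)*S i - 0)| ≤ _
            rw [show (0:ℝ) + t*((8/10)*S i - 0) = t*((8/10)*S i) by ring,
              abs_of_nonneg (by nlinarith)]
            nlinarith
          · show |(0:ℝ)| ≤ _
            rw [abs_zero]
            exact abs_nonneg _
          · show |γ + t*(γ-γ)| ≤ _
            rw [e3]
            exact F0_bounds3 p hp haF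
          · show |γ| ≤ |γ + t*(γ-γ)|
            rw [e3]
        · rcases eq_or_lt_of_le ht0 with h0 | h0
          · have heq : ((α + t*(α-α), 0 + t*((8/10)*S i - 0), γ + t*(γ-γ)) : E3')
                = ((α, (0:ℝ), γ) : E3') := by
              rw [← h0, Prod.mk.injEq, Prod.mk.injEq]
              exact ⟨by ring, by ring, by ring⟩
            rw [heq]
            exact haR
          · apply notR_y p hp Gf
            show 0 + t*((8/10)*S i - 0) ≠ 0
            have hpos : (0:ℝ) < t*((8/10)*S i) := by positivity
            intro hcon
            nlinarith
      have h1 : ((α, (8/10)*S i, γ) : E3') ∈ F0 p hp i := nudge.target_mem.1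
      exact (nudge.trans (ascend p hp Gf h1 (by linarith) hz.le)).trans
        (topmove p hp Gf (ascend p hp Gf h1 (by linarith) hz.le).target_mem.1)
    · have asc := ascend p hp Gf (α := α) haF hy0 hz.le
      exact asc.trans (topmove p hp Gf asc.target_mem.1)
  · push_neg at hz
    have des := descend p hp Gf (α := α) haF hz
    have bot := botmove p hp Gf des.target_mem.1
    exact (des.trans bot).trans (sidemove p hp Gf i)

lemma F1_pathconn (i : Fin n) : IsPathConnected (F1 p hp Gf i) := by
  refine ⟨TP p hp i, TP_mem p hp Gf i, ?_⟩
  intro y hy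
  exact (joined_TP p hp Gf hy).symm

lemma rep_adj_iff (hGadj : ∀ i : Fin n, i ≠ 0 → Gf.Adj (p i) i)
    (u v : Fin n) (huv : u ≠ v) :
    Gf.Adj u v ↔ Sightline3 (F1 p hp Gf) u v := by
  constructor
  · intro hadj
    by_cases h1 : v ≠ 0 ∧ p v = u
    · obtain ⟨hv0, hpv⟩ := h1
      have hsv := sg_pos p hp v
      refine ⟨(X v, (9/10)*S v, 0),
        ⟨by rw [← hpv]; exact tree_sight_a p hp hv0,
          notR_y p hp Gf (show (9/10)*S v ≠ 0 by linarith)⟩,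
        (X v, (8/10)*S v, 0),
        ⟨tree_sight_b p hp hv0, notR_y p hp Gf (show (8/10)*S v ≠ 0 by linarith)⟩, ?_⟩
      intro w hwu hwv
      rw [Set.eq_empty_iff_forall_notMem]
      rintro y ⟨hys, hyF⟩
      exact tree_sight_mid p hp hv0 (by rw [hpv]; exact hwu) hwv hys hyF.1
    · by_cases h2 : u ≠ 0 ∧ p u = v
      · obtain ⟨hu0, hpu⟩ := h2
        have hsu := sg_pos p hp u
        refine ⟨(X u, (8/10)*S u, 0),
          ⟨tree_sight_b p hp hu0, notR_y p hp Gf (show (8/10)*S u ≠ 0 by linarith)⟩,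
          (X u, (9/10)*S u, 0),
          ⟨by rw [← hpu]; exact tree_sight_a p hp hu0,
            notR_y p hp Gf (show (9/10)*S u ≠ 0 by linarith)⟩, ?_⟩
        intro w hwu hwv
        rw [Set.eq_empty_iff_forall_notMem]
        rintro y ⟨hys, hyF⟩
        rw [segment_symm] at hys
        exact tree_sight_mid p hp hu0 (by rw [hpu]; exact hwv) hwu hys hyF.1
      · have hk : ¬ TreeAdj p u v := fun hc => hc.elim h2 h1
        refine ⟨PK p hp Gf ⟨(u,v), hadj, hk⟩,
          ⟨PK_mem p hp Gf _, PK_notR p hp Gf _⟩,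
          QK p hp Gf ⟨(u,v), hadj, hk⟩,
          ⟨QK_mem p hp Gf _, QK_notR p hp Gf _⟩, ?_⟩
        intro w hwu hwv
        rw [Set.eq_empty_iff_forall_notMem]
        rintro y ⟨hys, hyF⟩
        exact edge_sight_mid p hp Gf ⟨(u,v), hadj, hk⟩ hwu hwv hys hyF
  · intro hsight
    by_contra hnadj
    obtain ⟨a, ha, b, hb, hcond⟩ := hsight
    exact no_sight p hp Gf hGadj huv hnadj ha hb hcond

end Tree

lemma Sightline3_equiv {V W : Type*} (σ : V ≃ W) (FF : W → Set (ℝ × ℝ × ℝ)) (u v : V) :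
    Sightline3 (fun x => FF (σ x)) u v ↔ Sightline3 FF (σ u) (σ v) := by
  constructor
  · rintro ⟨a, ha, b, hb, h⟩
    refine ⟨a, ha, b, hb, fun w hwu hwv => ?_⟩
    have h1 : σ.symm w ≠ u := by
      intro hc
      exact hwu (by rw [← hc, Equiv.apply_symm_apply])
    have h2 : σ.symm w ≠ v := by
      intro hc
      exact hwv (by rw [← hc, Equiv.apply_symm_apply])
    have := h (σ.symm w) h1 h2
    simpa [Equiv.apply_symm_apply] using this
  · rintro ⟨a, ha, b, hb, h⟩
    refine ⟨a, ha, b, hb, fun w hwu hwv => ?_⟩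
    exact h (σ w) (fun hc => hwu (σ.injective hc)) (fun hc => hwv (σ.injective hc))


theorem stmt16 {V : Type*} [Fintype V] (G : SimpleGraph V) (hG : G.Connected) :
    ∃ F : V → Set (ℝ × ℝ × ℝ), IsVisRep3 G F ∧ ∀ v, IsConnected (F v) := by
  classical
  haveI hne : Nonempty V := hG.nonempty
  set n := Fintype.card V with hn
  haveI : NeZero n := ⟨Fintype.card_ne_zero⟩
  obtain ⟨f, hfb, hford⟩ := exists_ordering G hG
  let e : Fin n ≃ V := Equiv.ofBijective f hfb
  have hvz : ∀ i : Fin n, i ≠ 0 → i.val ≠ 0 := fun i h hc => h (Fin.ext (by simpa using hc))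
  let p : Fin n → Fin n := fun i =>
    if h : i = 0 then 0 else Classical.choose (hford i (hvz i h))
  have hp : p 0 = 0 ∧ ∀ i : Fin n, i ≠ 0 → p i < i := by
    constructor
    · simp [p]
    · intro i h
      simp only [p, dif_neg h]
      exact (Classical.choose_spec (hford i (hvz i h))).1
  let Gf : SimpleGraph (Fin n) := SimpleGraph.comap e G
  have hGadj : ∀ i : Fin n, i ≠ 0 → Gf.Adj (p i) i := by
    intro i h
    have hs := (Classical.choose_spec (hford i (hvz i h))).2
    simp only [p, dif_neg h]
    exact hs
  refine ⟨fun v => F1 p hp Gf (e.symm v), ⟨?_, ?_, ?_⟩, ?_⟩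
  · intro v
    exact ⟨TP p hp (e.symm v), TP_mem p hp Gf (e.symm v)⟩
  · intro u v huv
    rw [Set.disjoint_left]
    intro y hy hy'
    exact F0_disj p hp (fun hc => huv (e.symm.injective hc)) hy.1 hy'.1
  · intro u v huv
    have h1 : G.Adj u v ↔ Gf.Adj (e.symm u) (e.symm v) := by
      simp [Gf, SimpleGraph.comap_adj]
    rw [h1, rep_adj_iff p hp Gf hGadj _ _ (fun hc => huv (e.symm.injective hc))]
    exact (Sightline3_equiv e.symm (F1 p hp Gf) u v).symm
  · intro v
    exact (F1_pathconn p hp Gf (e.symm v)).isConnected
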